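/- arXiv:1811.11331 — 2 statements merged into one kernel-verified Lean document; each statement's English description precedes it below -/
import Mathlib

section
/- Let R > 0 and let x ∈ ℝ². Any set S of points in the closed disk of radius R centered at x such that any two distinct points of S are at Euclidean distance strictly greater than R has cardinality at most 5. -/
open Real Complex

noncomputable def parg (z : ℂ) : ℝ := if 0 ≤ z.arg then z.arg else z.arg + 2 * π

lemma parg_mem (z : ℂ) : parg z ∈ Set.Ico (0:ℝ) (2*π) := by
  unfold parg
  have h1 := Complex.arg_mem_Ioc z
  have hpi := Real.pi_pos
  rcases h1 with ⟨hlo, hhi⟩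
  split_ifs with h
  · exact ⟨h, by linarith⟩
  · push_neg at h
    exact ⟨by linarith, by linarith⟩

lemma cos_parg (z : ℂ) (hz : z ≠ 0) : Real.cos (parg z) = z.re / ‖z‖ := by
  unfold parg
  split_ifs with h
  · exact Complex.cos_arg hz
  · rw [Real.cos_add_two_pi]; exact Complex.cos_arg hz

lemma sin_parg (z : ℂ) : Real.sin (parg z) = z.im / ‖z‖ := by
  unfold parg
  split_ifs with h
  · exact Complex.sin_arg z
  · rw [Real.sin_add_two_pi]; exact Complex.sin_arg z

lemma re_eq (z : ℂ) (hz : z ≠ 0) : z.re = ‖z‖ * Real.cos (parg z) := by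
  have h : ‖z‖ ≠ 0 := by simpa using hz
  rw [cos_parg z hz]
  field_simp

lemma im_eq (z : ℂ) (hz : z ≠ 0) : z.im = ‖z‖ * Real.sin (parg z) := by
  have h : ‖z‖ ≠ 0 := by simpa using hz
  rw [sin_parg z]
  field_simp

/-- If the angular positions of two points in the punctured disk are within π/3
(as measured by cosine), then they are within distance R. -/
lemma pair_close (R : ℝ) (a b : ℂ) (ha0 : a ≠ 0) (hb0 : b ≠ 0)
    (haR : ‖a‖ ≤ R) (hbR : ‖b‖ ≤ R)
    (hcos : 1/2 ≤ Real.cos (parg a - parg b)) :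
    ‖a - b‖ ≤ R := by
  have hra : 0 ≤ ‖a‖ := norm_nonneg _
  have hrb : 0 ≤ ‖b‖ := norm_nonneg _
  have hinner : a.re * b.re + a.im * b.im
      = ‖a‖ * ‖b‖ * Real.cos (parg a - parg b) := by
    rw [re_eq a ha0, re_eq b hb0, im_eq a ha0, im_eq b hb0, Real.cos_sub]
    ring
  have hsq : (‖a - b‖)^2 = (‖a‖)^2 + (‖b‖)^2
      - 2 * (a.re * b.re + a.im * b.im) := by
    rw [← Complex.normSq_eq_norm_sq, ← Complex.normSq_eq_norm_sq, ← Complex.normSq_eq_norm_sq]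
    simp only [Complex.normSq_apply, Complex.sub_re, Complex.sub_im]
    ring
  have hle : (‖a - b‖)^2 ≤ R^2 := by
    rw [hsq, hinner]
    have h1 : ‖a‖ * ‖b‖ * (1/2)
        ≤ ‖a‖ * ‖b‖ * Real.cos (parg a - parg b) :=
      mul_le_mul_of_nonneg_left hcos (mul_nonneg hra hrb)
    nlinarith [mul_nonneg (sub_nonneg.2 haR) (sub_nonneg.2 hbR), mul_nonneg hra hrb]
  have hRnn : 0 ≤ R := le_trans hra haR
  nlinarith [norm_nonneg (a - b)]

/-- Base case: one of the points lies on the positive real axis. -/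
lemma complex_packing_base (R : ℝ) (hR : 0 < R) (T : Finset ℂ)
    (hT : ∀ z ∈ T, ‖z‖ ≤ R ∧ z ≠ 0)
    (hsep : ∀ a ∈ T, ∀ b ∈ T, a ≠ b → R < ‖a - b‖)
    (z₀ : ℂ) (hz₀ : z₀ ∈ T) (hz₀arg : parg z₀ = 0) :
    T.card ≤ 5 := by
  by_contra hcard
  push_neg at hcard
  have hpi := Real.pi_pos
  set f : ℂ → ℤ := fun z => ⌊parg z * 3 / π⌋ with hf
  obtain ⟨hz₀R, hz₀0⟩ := hT z₀ hz₀
  -- first case: some other point lies in sector 0 or 5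
  by_cases hex : ∃ z ∈ T.erase z₀, f z = 0 ∨ f z = 5
  · obtain ⟨z, hzmem, hfz⟩ := hex
    have hzT : z ∈ T := Finset.mem_of_mem_erase hzmem
    have hzne : z ≠ z₀ := Finset.ne_of_mem_erase hzmem
    obtain ⟨hzR, hz0⟩ := hT z hzT
    have hcos : 1/2 ≤ Real.cos (parg z - parg z₀) := by
      rw [hz₀arg, sub_zero]
      have hm := parg_mem z
      rcases hfz with hfz | hfz
      · -- parg z ∈ [0, π/3)
        have h1 : parg z * 3 / π < 1 := by
          have hlt : parg z * 3 / π < (f z : ℝ) + 1 := Int.lt_floor_add_one _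
          rw [hfz] at hlt; push_cast at hlt; linarith
        rw [div_lt_one hpi] at h1
        rw [show (1:ℝ)/2 = Real.cos (π/3) from (Real.cos_pi_div_three).symm]
        exact Real.cos_le_cos_of_nonneg_of_le_pi hm.1 (by linarith) (by linarith)
      · -- parg z ∈ [5π/3, 2π)
        have h1 : (5:ℝ) ≤ parg z * 3 / π := by
          have hle : (f z : ℝ) ≤ parg z * 3 / π := Int.floor_le _
          rw [hfz] at hle; push_cast at hle; linarith
        rw [le_div_iff₀ hpi] at h1
        rw [show Real.cos (parg z) = Real.cos (2*π - parg z) by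
          rw [Real.cos_sub, Real.cos_two_pi, Real.sin_two_pi]; ring_nf]
        rw [show (1:ℝ)/2 = Real.cos (π/3) from (Real.cos_pi_div_three).symm]
        exact Real.cos_le_cos_of_nonneg_of_le_pi (by linarith [hm.2]) (by linarith)
          (by linarith)
    have := pair_close R z z₀ hz0 hz₀0 hzR hz₀R hcos
    exact absurd this (not_le.2 (hsep z hzT z₀ hz₀ hzne))
  · -- all other points in sectors 1..4: pigeonhole
    push_neg at hex
    have hmaps : ∀ z ∈ T.erase z₀, f z ∈ Finset.Icc (1:ℤ) 4 := by
      intro z hz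
      have hzT : z ∈ T := Finset.mem_of_mem_erase hz
      have hm := parg_mem z
      have h0 : (0:ℝ) ≤ parg z * 3 / π := div_nonneg (by nlinarith [hm.1]) hpi.le
      have h6 : parg z * 3 / π < 6 := by
        rw [div_lt_iff₀ hpi]; nlinarith [hm.2]
      have hlo : (0:ℤ) ≤ f z := Int.le_floor.2 (by exact_mod_cast h0)
      have hhi : f z ≤ 5 := by
        have : (f z : ℝ) < 6 := lt_of_le_of_lt (Int.floor_le _) h6
        have : f z < 6 := by exact_mod_cast this
        omega
      have hne := hex z hz
      simp only [Finset.mem_Icc]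
      omega
    have hlt : (Finset.Icc (1:ℤ) 4).card < (T.erase z₀).card := by
      have h1 : (Finset.Icc (1:ℤ) 4).card = 4 := rfl
      have h2 : (T.erase z₀).card = T.card - 1 := Finset.card_erase_of_mem hz₀
      omega
    obtain ⟨a, ha, b, hb, hab, hfab⟩ :=
      Finset.exists_ne_map_eq_of_card_lt_of_maps_to hlt hmaps
    have haT : a ∈ T := Finset.mem_of_mem_erase ha
    have hbT : b ∈ T := Finset.mem_of_mem_erase hb
    obtain ⟨haR, ha0⟩ := hT a haT
    obtain ⟨hbR, hb0⟩ := hT b hbT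
    have hdiff : |parg a - parg b| < π / 3 := by
      have hfa : (f a : ℝ) ≤ parg a * 3 / π := Int.floor_le _
      have hfa' : parg a * 3 / π < f a + 1 := Int.lt_floor_add_one _
      have hfb : (f b : ℝ) ≤ parg b * 3 / π := Int.floor_le _
      have hfb' : parg b * 3 / π < f b + 1 := Int.lt_floor_add_one _
      rw [hfab] at hfa hfa'
      rw [abs_lt]
      constructor
      · have h1 : (-1:ℝ) < (parg a - parg b) * 3 / π := by
          have he : (parg a - parg b) * 3 / π = parg a * 3 / π - parg b * 3 / π := by
            ring
          rw [he]; linarith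
        rw [lt_div_iff₀ hpi] at h1
        linarith
      · have h1 : (parg a - parg b) * 3 / π < 1 := by
          have he : (parg a - parg b) * 3 / π = parg a * 3 / π - parg b * 3 / π := by
            ring
          rw [he]; linarith
        rw [div_lt_one hpi] at h1
        linarith
    have hcos : 1/2 ≤ Real.cos (parg a - parg b) := by
      rw [← Real.cos_abs]
      rw [show (1:ℝ)/2 = Real.cos (π/3) from (Real.cos_pi_div_three).symm]
      exact Real.cos_le_cos_of_nonneg_of_le_pi (abs_nonneg _) (by linarith) hdiff.le
    have := pair_close R a b ha0 hb0 haR hbR hcos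
    exact absurd this (not_le.2 (hsep a haT b hbT hab))

lemma complex_packing (R : ℝ) (hR : 0 < R) (T : Finset ℂ)
    (hT : ∀ z ∈ T, ‖z‖ ≤ R ∧ z ≠ 0)
    (hsep : ∀ a ∈ T, ∀ b ∈ T, a ≠ b → R < ‖a - b‖) :
    T.card ≤ 5 := by
  rcases T.eq_empty_or_nonempty with rfl | ⟨z₀, hz₀⟩
  · simp
  -- rotate so that z₀ lands on the positive real axis
  set w : ℂ := Complex.exp (-(z₀.arg) * Complex.I) with hw
  have hwabs : ‖w‖ = 1 := by
    rw [hw]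
    rw [show (-(z₀.arg) : ℂ) * Complex.I = ((-z₀.arg : ℝ) : ℂ) * Complex.I by push_cast; ring]
    exact Complex.norm_exp_ofReal_mul_I _
  have hw0 : w ≠ 0 := by
    intro h; rw [h] at hwabs; simp at hwabs
  obtain ⟨hz₀R, hz₀0⟩ := hT z₀ hz₀
  have hz₀w : z₀ * w = (‖z₀‖ : ℂ) := by
    conv_lhs => rw [← Complex.norm_mul_exp_arg_mul_I z₀]
    rw [hw, mul_assoc, ← Complex.exp_add]
    ring_nf
    simp
  set T' : Finset ℂ := T.image (· * w) with hT'
  have hinj : Set.InjOn (· * w) T := fun a _ b _ h =>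
    mul_right_cancel₀ hw0 h
  have hcard : T'.card = T.card := Finset.card_image_of_injOn hinj
  have hmemT' : ∀ z ∈ T, z * w ∈ T' := fun z hz => Finset.mem_image_of_mem _ hz
  have hT'prop : ∀ z ∈ T', ‖z‖ ≤ R ∧ z ≠ 0 := by
    intro z hz
    obtain ⟨y, hy, rfl⟩ := Finset.mem_image.1 hz
    obtain ⟨hyR, hy0⟩ := hT y hy
    constructor
    · rw [norm_mul, hwabs, mul_one]; exact hyR
    · exact mul_ne_zero hy0 hw0
  have hsep' : ∀ a ∈ T', ∀ b ∈ T', a ≠ b → R < ‖a - b‖ := by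
    intro a ha b hb hab
    obtain ⟨ya, hya, rfl⟩ := Finset.mem_image.1 ha
    obtain ⟨yb, hyb, rfl⟩ := Finset.mem_image.1 hb
    have hne : ya ≠ yb := fun h => hab (by rw [h])
    have := hsep ya hya yb hyb hne
    calc R < ‖ya - yb‖ := this
      _ = ‖ya * w - yb * w‖ := by
          rw [← sub_mul, norm_mul, hwabs, mul_one]
  have hargz₀ : parg (z₀ * w) = 0 := by
    rw [hz₀w]
    unfold parg
    have habs0 : (0:ℝ) ≤ ‖z₀‖ := norm_nonneg _
    rw [Complex.arg_ofReal_of_nonneg habs0]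
    simp
  have := complex_packing_base R hR T' hT'prop hsep' (z₀ * w) (hmemT' z₀ hz₀) hargz₀
  omega

/-- Any set of points in the closed disk of radius `R` around `x` in the plane,
each distinct from `x`, that are pairwise more than `R` apart, has at most 5 points. -/
theorem packing_in_disk_card_le_five
    (R : ℝ) (hR : 0 < R) (x : EuclideanSpace ℝ (Fin 2))
    (S : Finset (EuclideanSpace ℝ (Fin 2)))
    (hS : ∀ y ∈ S, dist y x ≤ R ∧ y ≠ x)
    (hsep : ∀ a ∈ S, ∀ b ∈ S, a ≠ b → R < dist a b) :
    S.card ≤ 5 := by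
  set φ : EuclideanSpace ℝ (Fin 2) → ℂ := fun v => ⟨v 0 - x 0, v 1 - x 1⟩ with hφ
  have hdist : ∀ a b : EuclideanSpace ℝ (Fin 2),
      ‖φ a - φ b‖ = dist a b := by
    intro a b
    rw [EuclideanSpace.dist_eq]
    rw [Complex.norm_def, Complex.normSq_apply]
    congr 1
    rw [Fin.sum_univ_two]
    simp [hφ, Complex.sub_re, Complex.sub_im, Real.dist_eq, sq_abs]
    ring
  have hx0 : φ x = 0 := by
    simp [hφ, Complex.ext_iff]
  have habs : ∀ a : EuclideanSpace ℝ (Fin 2), ‖φ a‖ = dist a x := by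
    intro a
    rw [← hdist a x, hx0, sub_zero]
  have hinj : Set.InjOn φ S := by
    intro a ha b hb h
    have : ‖φ a - φ b‖ = 0 := by rw [h]; simp
    rw [hdist] at this
    exact dist_eq_zero.1 this
  set T : Finset ℂ := S.image φ with hT
  have hcard : T.card = S.card := Finset.card_image_of_injOn hinj
  have hTprop : ∀ z ∈ T, ‖z‖ ≤ R ∧ z ≠ 0 := by
    intro z hz
    obtain ⟨y, hy, rfl⟩ := Finset.mem_image.1 hz
    obtain ⟨hyR, hyx⟩ := hS y hy
    refine ⟨by rw [habs]; exact hyR, ?_⟩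
    intro h
    have : ‖φ y‖ = 0 := by rw [h]; simp
    rw [habs] at this
    exact hyx (dist_eq_zero.1 this)
  have hsepT : ∀ a ∈ T, ∀ b ∈ T, a ≠ b → R < ‖a - b‖ := by
    intro a ha b hb hab
    obtain ⟨ya, hya, rfl⟩ := Finset.mem_image.1 ha
    obtain ⟨yb, hyb, rfl⟩ := Finset.mem_image.1 hb
    have hne : ya ≠ yb := fun h => hab (by rw [h])
    rw [hdist]
    exact hsep ya hya yb hyb hne
  have := complex_packing R hR T hTprop hsepT
  omega
end

section
/- Let x₁,…,xₙ ∈ ℝ² and R > 0, and define the Gilbert graph G on vertex set {1,…,n} with an edge between i ≠ j iff |x_i - x_j| ≤ R. For each vertex i, let N_i = {j < i : |x_i - x_j| ≤ R} be its lesser neighborhood, and let A be the graph in which each vertex i is adjacent to, for each connected component C of the subgraph of G induced on N_i, the maximum-index vertex max C (and these are all edges of A, symmetrized). Then for every i, the number of connected components of the induced subgraph of G on N_i is at most 5; equivalently, every vertex initiates at most 5 connections. -/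
noncomputable section
open Real
section AuxLemmas

lemma cos_arg_sub_lt_half {R : ℝ} (hR : 0 < R) (z w : ℂ) (hz : z ≠ 0) (hw : w ≠ 0)
    (hzR : ‖z‖ ≤ R) (hwR : ‖w‖ ≤ R) (hfar : R < ‖z - w‖) :
    Real.cos (z.arg - w.arg) < 1/2 := by
  by_contra hc
  push_neg at hc
  set a := ‖z‖ with ha
  set b := ‖w‖ with hb
  have ha0 : 0 < a := norm_pos_iff.mpr hz
  have hb0 : 0 < b := norm_pos_iff.mpr hw
  have hre : (z * (starRingEnd ℂ) w).re = a * b * Real.cos (z.arg - w.arg) := by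
    have h1 : (z * (starRingEnd ℂ) w).re = z.re * w.re + z.im * w.im := by
      simp [Complex.mul_re, Complex.conj_re, Complex.conj_im]
    rw [h1, ← Complex.norm_mul_cos_arg z, ← Complex.norm_mul_sin_arg z,
      ← Complex.norm_mul_cos_arg w, ← Complex.norm_mul_sin_arg w, Real.cos_sub]
    ring
  have hsq : ‖z - w‖ ^ 2 = a^2 + b^2 - 2 * (a * b * Real.cos (z.arg - w.arg)) := by
    rw [← hre, Complex.sq_norm, Complex.normSq_sub, ← Complex.sq_norm, ← Complex.sq_norm]
  have h2 : R^2 < ‖z - w‖^2 := by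
    have := norm_nonneg (z - w)
    nlinarith
  nlinarith [mul_pos ha0 hb0,
    mul_nonneg (mul_nonneg ha0.le hb0.le) (by linarith : (0:ℝ) ≤ 2 * Real.cos (z.arg - w.arg) - 1),
    mul_nonneg (sub_nonneg.2 hzR) (sub_nonneg.2 hwR),
    mul_nonneg ha0.le (sub_nonneg.2 hzR), mul_nonneg hb0.le (sub_nonneg.2 hwR)]

lemma six_angles_impossible (θ : Fin 6 → ℝ) (hmem : ∀ k, θ k ∈ Set.Ico 0 (2*π))
    (hcos : ∀ j k, j ≠ k → Real.cos (θ j - θ k) < 1/2) : False := by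
  have hπ := Real.pi_pos
  have h3 : 0 < π/3 := by linarith
  have hbin : ∀ k, ∃ m : Fin 6, θ k ∈ Set.Ico ((m : ℝ) * (π/3)) (((m : ℝ)+1) * (π/3)) := by
    intro k
    obtain ⟨h0, h2⟩ := hmem k
    set m : ℤ := ⌊θ k / (π/3)⌋ with hm
    have hml : (m : ℝ) ≤ θ k / (π/3) := Int.floor_le _
    have hmu : θ k / (π/3) < m + 1 := Int.lt_floor_add_one _
    have hm0 : 0 ≤ m := Int.le_floor.2 (by exact_mod_cast div_nonneg h0 h3.le)
    have hm6 : m < 6 := by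
      have h6 : θ k / (π/3) < 6 := by rw [div_lt_iff₀ h3]; linarith
      exact_mod_cast lt_of_le_of_lt hml h6
    have hc : ((m.toNat : ℕ) : ℝ) = (m : ℝ) := by exact_mod_cast Int.toNat_of_nonneg hm0
    refine ⟨⟨m.toNat, by omega⟩, ?_, ?_⟩
    · rw [Fin.val_mk, hc]
      calc (m:ℝ) * (π/3) ≤ (θ k / (π/3)) * (π/3) := by nlinarith
        _ = θ k := by field_simp
    · rw [Fin.val_mk, hc]
      have : θ k / (π/3) < (m:ℝ) + 1 := hmu
      calc θ k = (θ k / (π/3)) * (π/3) := by field_simp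
        _ < ((m:ℝ) + 1) * (π/3) := by nlinarith
  choose f hf using hbin
  have hinj : Function.Injective f := by
    intro j k hjk
    by_contra hne
    have hj := hf j
    have hk := hf k
    rw [hjk] at hj
    have habs : |θ j - θ k| < π/3 := by
      rw [abs_lt]
      constructor
      · nlinarith [hj.1, hj.2, hk.1, hk.2]
      · nlinarith [hj.1, hj.2, hk.1, hk.2]
    have : Real.cos (π/3) < Real.cos |θ j - θ k| :=
      Real.cos_lt_cos_of_nonneg_of_le_pi (abs_nonneg _) (by linarith) habs
    rw [Real.cos_pi_div_three, Real.cos_abs] at this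
    exact absurd (hcos j k hne) (by linarith)
  have hbij : Function.Bijective f := (Finite.injective_iff_bijective).1 hinj
  obtain ⟨g, hg1, hg2⟩ := Function.bijective_iff_has_inverse.1 hbij
  have hφm : ∀ m : Fin 6, θ (g m) ∈ Set.Ico ((m:ℝ) * (π/3)) (((m:ℝ)+1) * (π/3)) := by
    intro m
    have := hf (g m)
    rwa [hg2 m] at this
  have hgne : ∀ m m' : Fin 6, m ≠ m' → g m ≠ g m' := by
    intro m m' h hc
    exact h (by rw [← hg2 m, ← hg2 m', hc])
  have hgap : ∀ m : Fin 6, ∀ m' : Fin 6, m ≠ m' → ((m:ℕ):ℝ) + 1 = ((m':ℕ):ℝ) →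
      π/3 < θ (g m') - θ (g m) := by
    intro m m' hne hmm
    obtain ⟨h1l, h1u⟩ := hφm m
    obtain ⟨h2l, h2u⟩ := hφm m'
    rw [← hmm] at h2l h2u
    have hδpos : 0 < θ (g m') - θ (g m) := by nlinarith
    have hδlt : θ (g m') - θ (g m) < 2*(π/3) := by nlinarith
    have hcosδ := hcos (g m') (g m) (hgne m' m (Ne.symm hne))
    by_contra hle
    push_neg at hle
    have : Real.cos (θ (g m') - θ (g m)) ≥ Real.cos (π/3) := by
      rcases eq_or_lt_of_le hle with h | h
      · rw [h]
      · exact le_of_lt (Real.cos_lt_cos_of_nonneg_of_le_pi hδpos.le (by linarith) h)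
    rw [Real.cos_pi_div_three] at this
    linarith
  have c0 : (((0:Fin 6):ℕ):ℝ) = 0 := by norm_num
  have c1 : (((1:Fin 6):ℕ):ℝ) = 1 := by norm_num
  have c2 : (((2:Fin 6):ℕ):ℝ) = 2 := by norm_num
  have c3 : (((3:Fin 6):ℕ):ℝ) = 3 := by rw [show ((3:Fin 6):ℕ) = 3 from rfl]; norm_num
  have c4 : (((4:Fin 6):ℕ):ℝ) = 4 := by rw [show ((4:Fin 6):ℕ) = 4 from rfl]; norm_num
  have c5 : (((5:Fin 6):ℕ):ℝ) = 5 := by rw [show ((5:Fin 6):ℕ) = 5 from rfl]; norm_num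
  have g01 := hgap 0 1 (by decide) (by rw [c0, c1]; norm_num)
  have g12 := hgap 1 2 (by decide) (by rw [c1, c2]; norm_num)
  have g23 := hgap 2 3 (by decide) (by rw [c2, c3]; norm_num)
  have g34 := hgap 3 4 (by decide) (by rw [c3, c4]; norm_num)
  have g45 := hgap 4 5 (by decide) (by rw [c4, c5]; norm_num)
  have h0 : 0 ≤ θ (g 0) := by
    have := (hφm 0).1; rw [c0] at this; linarith
  have h5 : θ (g 5) < 2*π := by
    have := (hφm 5).2; rw [c5] at this; linarith
  have hD : 5*(π/3) < θ (g 5) - θ (g 0) := by linarith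
  have hD2 : θ (g 5) - θ (g 0) < 2*π := by linarith
  have hcos50 := hcos (g 5) (g 0) (hgne 5 0 (by decide))
  have hgt : Real.cos (2*π - (θ (g 5) - θ (g 0))) > 1/2 := by
    have hlt : 2*π - (θ (g 5) - θ (g 0)) < π/3 := by linarith
    have := Real.cos_lt_cos_of_nonneg_of_le_pi
      (by linarith : (0:ℝ) ≤ 2*π - (θ (g 5) - θ (g 0))) (by linarith : π/3 ≤ π) hlt
    rw [Real.cos_pi_div_three] at this
    linarith
  have heq : Real.cos (2*π - (θ (g 5) - θ (g 0))) = Real.cos (θ (g 5) - θ (g 0)) := by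
    rw [show 2*π - (θ (g 5) - θ (g 0)) = -((θ (g 5) - θ (g 0)) - 2*π) by ring,
      Real.cos_neg, Real.cos_sub_two_pi]
  rw [heq] at hgt
  linarith

/-- Identify `ℝ²` with `ℂ`. -/
def toC (v : EuclideanSpace ℝ (Fin 2)) : ℂ := ⟨v 0, v 1⟩

lemma abs_toC_sub (a b : EuclideanSpace ℝ (Fin 2)) :
    ‖toC a - toC b‖ = dist a b := by
  rw [EuclideanSpace.dist_eq, Complex.norm_def, Complex.normSq_apply]
  simp only [toC, Complex.sub_re, Complex.sub_im, Fin.sum_univ_two, Real.dist_eq, sq_abs]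
  congr 1
  ring

end AuxLemmas

/-- The Gilbert graph on vertex set `Fin n`: `i ≠ j` are adjacent iff `dist (x i) (x j) ≤ R`. -/
def gilbert (n : ℕ) (x : Fin n → EuclideanSpace ℝ (Fin 2)) (R : ℝ) : SimpleGraph (Fin n) where
  Adj i j := i ≠ j ∧ dist (x i) (x j) ≤ R
  symm := by
    constructor; intro i j h
    exact ⟨h.1.symm, by rw [dist_comm]; exact h.2⟩
  loopless := by constructor; intro i h; exact h.1 rfl

/-- The lesser neighborhood `N_i = {j < i : dist (x i) (x j) ≤ R}`. -/
def lesserN (n : ℕ) (x : Fin n → EuclideanSpace ℝ (Fin 2)) (R : ℝ) (i : Fin n) : Set (Fin n) :=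
  {j | j < i ∧ dist (x i) (x j) ≤ R}

/-- Vertex `i` initiates a connection to `j` iff `j` is the maximum-index vertex of its
connected component in the Gilbert graph induced on the lesser neighborhood `N_i`. -/
def initiates (n : ℕ) (x : Fin n → EuclideanSpace ℝ (Fin 2)) (R : ℝ) (i j : Fin n) : Prop :=
  ∃ hj : j ∈ lesserN n x R i,
    ∀ k, ∀ hk : k ∈ lesserN n x R i,
      ((gilbert n x R).induce (lesserN n x R i)).Reachable ⟨j, hj⟩ ⟨k, hk⟩ → k ≤ j

/-- The topology produced by Algorithm 1: the symmetrization of the initiated connections. -/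
def Agraph (n : ℕ) (x : Fin n → EuclideanSpace ℝ (Fin 2)) (R : ℝ) : SimpleGraph (Fin n) where
  Adj i j := initiates n x R i j ∨ initiates n x R j i
  symm := ⟨fun i j h => Or.symm h⟩
  loopless := by
    constructor; intro i h
    rcases h with ⟨hj, _⟩ | ⟨hj, _⟩ <;> exact absurd hj.1 (lt_irrefl i)

/-- Every vertex initiates at most 5 connections: the Gilbert graph induced on the
lesser neighborhood of any vertex has at most 5 connected components. -/
theorem components_of_lesser_neighborhood_le_five
    (n : ℕ) (x : Fin n → EuclideanSpace ℝ (Fin 2)) (R : ℝ) (hR : 0 < R) (i : Fin n) :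
    Nat.card ((gilbert n x R).induce (lesserN n x R i)).ConnectedComponent ≤ 5 := by
  by_contra hcard
  push_neg at hcard
  set G := (gilbert n x R).induce (lesserN n x R i) with hG
  haveI : Fintype G.ConnectedComponent := Fintype.ofFinite _
  rw [Nat.card_eq_fintype_card] at hcard
  obtain ⟨e⟩ : Nonempty (Fin 6 ↪ G.ConnectedComponent) := by
    rw [Function.Embedding.nonempty_iff_card_le, Fintype.card_fin]
    omega
  set p : Fin 6 → ↥(lesserN n x R i) := fun k => Quot.out (e k) with hp
  have hout : ∀ k, G.connectedComponentMk (p k) = e k := fun k => Quot.out_eq (e k)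
  have hfar : ∀ j k : Fin 6, j ≠ k → R < dist (x ↑(p j)) (x ↑(p k)) := by
    intro j k hjk
    by_contra hle
    push_neg at hle
    have hpne : (↑(p j) : Fin n) ≠ ↑(p k) := by
      intro h
      have : p j = p k := Subtype.ext h
      exact hjk (e.injective (by rw [← hout j, ← hout k, this]))
    have hadj : G.Adj (p j) (p k) := by
      show (gilbert n x R).Adj ↑(p j) ↑(p k)
      exact ⟨hpne, hle⟩
    exact hjk (e.injective (by
      rw [← hout j, ← hout k]
      exact SimpleGraph.ConnectedComponent.sound hadj.reachable))
  have hclose : ∀ k, dist (x i) (x ↑(p k)) ≤ R := fun k => (p k).2.2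
  set z : Fin 6 → ℂ := fun k => toC (x ↑(p k)) - toC (x i) with hz
  have habs : ∀ k, ‖z k‖ = dist (x ↑(p k)) (x i) := fun k => abs_toC_sub _ _
  have habsR : ∀ k, ‖z k‖ ≤ R := by
    intro k
    rw [habs k, dist_comm]
    exact hclose k
  have hzsub : ∀ j k, ‖z j - z k‖ = dist (x ↑(p j)) (x ↑(p k)) := by
    intro j k
    have : z j - z k = toC (x ↑(p j)) - toC (x ↑(p k)) := by rw [hz]; ring
    rw [this, abs_toC_sub]
  have hzne : ∀ k, z k ≠ 0 := by
    intro k hk0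
    have hd0 : dist (x ↑(p k)) (x i) = 0 := by rw [← habs k, hk0, norm_zero]
    obtain ⟨l, hl⟩ : ∃ l : Fin 6, l ≠ k := by
      rcases eq_or_ne k 0 with rfl | h
      · exact ⟨1, by decide⟩
      · exact ⟨0, Ne.symm h⟩
    have h1 := hfar k l (Ne.symm hl)
    have h2 : dist (x ↑(p k)) (x ↑(p l)) ≤ dist (x ↑(p k)) (x i) + dist (x i) (x ↑(p l)) :=
      dist_triangle _ _ _
    have := hclose l
    rw [dist_comm] at h1
    nlinarith [dist_comm (x ↑(p k)) (x ↑(p l))]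
  have hcosfar : ∀ j k : Fin 6, j ≠ k → Real.cos ((z j).arg - (z k).arg) < 1/2 := by
    intro j k hjk
    apply cos_arg_sub_lt_half hR (z j) (z k) (hzne j) (hzne k) (habsR j) (habsR k)
    rw [hzsub j k]
    exact hfar j k hjk
  set θ : Fin 6 → ℝ := fun k => π - (z k).arg with hθ
  have hmem : ∀ k, θ k ∈ Set.Ico 0 (2*π) := by
    intro k
    obtain ⟨h1, h2⟩ := Complex.arg_mem_Ioc (z k)
    exact ⟨by simp [hθ]; linarith, by simp [hθ]; linarith⟩
  refine six_angles_impossible θ hmem ?_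
  intro j k hjk
  have : θ j - θ k = -((z j).arg - (z k).arg) := by rw [hθ]; ring
  rw [this, Real.cos_neg]
  exact hcosfar j k hjk
end
end
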